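/- Let d ≥ 1, let R be a Borel probability measure on C₁ with endpoint disintegration (R^{xy}), and let μ, ν be Borel probability measures on ℝ^d. Assume there exists π ∈ Π^{C₁}(μ,ν) with H(π‖R) < ∞, and let π̂ be the unique minimizer of H(·‖R) over Π^{C₁}(μ,ν). Then: (i) the endpoint marginal π̂₀₁ is the unique minimizer of H(·‖R₀₁) over Π(μ,ν); (ii) π̂ equals the glued measure π̂₀₁ ⊗ R^·, i.e., the endpoint disintegration of π̂ coincides with that of R for π̂₀₁-a.e. (x,y); and (iii) H(π̂‖R) = H(π̂₀₁‖R₀₁). (The reduction (2.2) of the dynamic Schrödinger problem to the static one, with bridge interpolation.) -/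

import Mathlib

open MeasureTheory ProbabilityTheory Set
open scoped ENNReal NNReal Classical

noncomputable section

abbrev Euc (d : ℕ) := EuclideanSpace ℝ (Fin d)

/-- `C₁ = C([0,1], ℝ^d)` with the supremum metric. -/
abbrev PathSp (d : ℕ) := C(Set.Icc (0:ℝ) 1, Euc d)

instance (d : ℕ) : MeasurableSpace (PathSp d) := borel _
instance (d : ℕ) : BorelSpace (PathSp d) := ⟨rfl⟩

/-- Evaluation of a path at time `0`. -/
def ev0 {d : ℕ} (φ : PathSp d) : Euc d := φ ⟨0, Set.left_mem_Icc.mpr zero_le_one⟩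

/-- Evaluation of a path at time `1`. -/
def ev1 {d : ℕ} (φ : PathSp d) : Euc d := φ ⟨1, Set.right_mem_Icc.mpr zero_le_one⟩

/-- The endpoint map `φ ↦ (φ(0), φ(1))`. -/
def ep {d : ℕ} (φ : PathSp d) : Euc d × Euc d := (ev0 φ, ev1 φ)

/-- Relative entropy `H(p‖q) := ∫ log(dp/dq) dp ∈ [0,∞]` if `p ≪ q`, and `+∞` otherwise
(the integral split into its positive and negative parts). -/
def relEntropy {α : Type*} [MeasurableSpace α] (p q : Measure α) : ℝ≥0∞ :=
  if p ≪ q then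
    (∫⁻ a, ENNReal.ofReal (Real.log ((p.rnDeriv q a).toReal)) ∂p)
      - (∫⁻ a, ENNReal.ofReal (-Real.log ((p.rnDeriv q a).toReal)) ∂p)
  else ⊤

/-- The set `Π^{C₁}(μ,ν)` of path-space couplings: probability measures on `C₁` with
time-`0` marginal `μ` and time-`1` marginal `ν`. -/
def PathCouplings (d : ℕ) (μ ν : Measure (Euc d)) : Set (Measure (PathSp d)) :=
  {π | IsProbabilityMeasure π ∧ π.map ev0 = μ ∧ π.map ev1 = ν}

/-- The set `Π(μ,ν)` of couplings on `ℝ^d × ℝ^d`. -/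
def ProdCouplings (d : ℕ) (μ ν : Measure (Euc d)) : Set (Measure (Euc d × Euc d)) :=
  {m | IsProbabilityMeasure m ∧ m.map Prod.fst = μ ∧ m.map Prod.snd = ν}

namespace SchroAux

variable {α : Type*} [MeasurableSpace α]

/-- positive part integral -/
def pInt (p q : Measure α) : ℝ≥0∞ :=
  ∫⁻ a, ENNReal.ofReal (Real.log ((p.rnDeriv q a).toReal)) ∂p

/-- negative part integral -/
def nInt (p q : Measure α) : ℝ≥0∞ :=
  ∫⁻ a, ENNReal.ofReal (-Real.log ((p.rnDeriv q a).toReal)) ∂p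

lemma relEntropy_eq (p q : Measure α) :
    relEntropy p q = if p ≪ q then pInt p q - nInt p q else ⊤ := rfl

lemma relEntropy_eq_of_ac {p q : Measure α} (h : p ≪ q) :
    relEntropy p q = pInt p q - nInt p q := by rw [relEntropy_eq, if_pos h]

lemma relEntropy_eq_top_of_not_ac {p q : Measure α} (h : ¬ p ≪ q) :
    relEntropy p q = ⊤ := by rw [relEntropy_eq, if_neg h]

/-! ### Real inequalities -/

lemma max_sub_max_neg (x : ℝ) : x * max (Real.log x) 0 - x * max (-Real.log x) 0
    = x * Real.log x := by
  rcases le_total (Real.log x) 0 with h | h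
  · rw [max_eq_right h, max_eq_left (by linarith)]; ring
  · rw [max_eq_left h, max_eq_right (by linarith)]; ring

lemma real_key {t : ℝ} (ht : 0 ≤ t) :
    t * max (-Real.log t) 0 + t ≤ t * max (Real.log t) 0 + 1 := by
  rcases eq_or_lt_of_le ht with h0 | h0
  · simp [← h0]
  · have h1 : Real.log (1 / t) ≤ 1 / t - 1 := Real.log_le_sub_one_of_pos (by positivity)
    rw [Real.log_div one_ne_zero (ne_of_gt h0), Real.log_one] at h1
    have h2 : t * (0 - Real.log t) ≤ t * (1 / t - 1) :=
      mul_le_mul_of_nonneg_left (by linarith) h0.le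
    rw [mul_sub, mul_sub, mul_one_div_cancel (ne_of_gt h0)] at h2
    have := max_sub_max_neg t
    nlinarith [h2]

lemma real_key_strict {t : ℝ} (ht : 0 ≤ t) (hne : t ≠ 1) :
    t * max (-Real.log t) 0 + t < t * max (Real.log t) 0 + 1 := by
  rcases eq_or_lt_of_le ht with h0 | h0
  · simp [← h0]
  · have h1 : Real.log (1 / t) < 1 / t - 1 :=
      Real.log_lt_sub_one_of_pos (by positivity) (by
        simp only [one_div, ne_eq, inv_eq_one]; exact hne)
    rw [Real.log_div one_ne_zero (ne_of_gt h0), Real.log_one] at h1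
    have h2 : t * (0 - Real.log t) < t * (1 / t - 1) :=
      mul_lt_mul_of_pos_left (by linarith) h0
    rw [mul_sub, mul_sub, mul_one_div_cancel (ne_of_gt h0)] at h2
    have := max_sub_max_neg t
    nlinarith [h2]

lemma ofReal_eq_ofReal_max (x : ℝ) : ENNReal.ofReal x = ENNReal.ofReal (max x 0) := by
  rcases le_total x 0 with h | h
  · rw [max_eq_right h, ENNReal.ofReal_of_nonpos h, ENNReal.ofReal_zero]
  · rw [max_eq_left h]

/-- key pointwise ENNReal inequality: `g·(-log g)⁺ + g ≤ g·(log g)⁺ + 1`. -/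
lemma ennreal_key {g : ℝ≥0∞} (hg : g ≠ ⊤) :
    g * ENNReal.ofReal (-Real.log g.toReal) + g
      ≤ g * ENNReal.ofReal (Real.log g.toReal) + 1 := by
  set t := g.toReal with htdef
  have ht : 0 ≤ t := ENNReal.toReal_nonneg
  have hgt : g = ENNReal.ofReal t := (ENNReal.ofReal_toReal hg).symm
  rw [hgt, ofReal_eq_ofReal_max (-Real.log t), ofReal_eq_ofReal_max (Real.log t),
    ← ENNReal.ofReal_mul ht, ← ENNReal.ofReal_mul ht, ← ENNReal.ofReal_add (by positivity) ht,
    ← ENNReal.ofReal_one, ← ENNReal.ofReal_add (by positivity) zero_le_one]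
  exact ENNReal.ofReal_le_ofReal (real_key ht)

/-- equality case forces `g = 1`. -/
lemma ennreal_key_eq {g : ℝ≥0∞} (hg : g ≠ ⊤)
    (h : g * ENNReal.ofReal (-Real.log g.toReal) + g
      = g * ENNReal.ofReal (Real.log g.toReal) + 1) : g = 1 := by
  by_contra hne
  set t := g.toReal with htdef
  have ht : 0 ≤ t := ENNReal.toReal_nonneg
  have htne : t ≠ 1 := by
    intro h1
    exact hne (by rw [← ENNReal.ofReal_toReal hg, ← htdef, h1, ENNReal.ofReal_one])
  have hgt : g = ENNReal.ofReal t := (ENNReal.ofReal_toReal hg).symm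
  rw [hgt, ofReal_eq_ofReal_max (-Real.log t), ofReal_eq_ofReal_max (Real.log t),
    ← ENNReal.ofReal_mul ht, ← ENNReal.ofReal_mul ht, ← ENNReal.ofReal_add (by positivity) ht,
    ← ENNReal.ofReal_one, ← ENNReal.ofReal_add (by positivity) zero_le_one] at h
  rw [ENNReal.ofReal_eq_ofReal_iff (by positivity) (by positivity)] at h
  exact absurd h (ne_of_lt (real_key_strict ht htne))

/-- pointwise bound `g·(-log g)⁺ ≤ 1`. -/
lemma real_neg_bound {t : ℝ} (ht : 0 ≤ t) : t * max (-Real.log t) 0 ≤ 1 := by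
  rcases le_total 1 t with h | h
  · rw [max_eq_right (neg_nonpos.mpr (Real.log_nonneg h))]; simp
  · have hml : max (Real.log t) 0 = 0 := max_eq_right (Real.log_nonpos ht h)
    have := real_key ht
    rw [hml] at this
    linarith

lemma ennreal_neg_bound (g : ℝ≥0∞) :
    g * ENNReal.ofReal (-Real.log g.toReal) ≤ 1 := by
  rcases eq_or_ne g ⊤ with rfl | hg
  · simp
  · have ht : (0:ℝ) ≤ g.toReal := ENNReal.toReal_nonneg
    calc g * ENNReal.ofReal (-Real.log g.toReal)
        = ENNReal.ofReal (g.toReal * max (-Real.log g.toReal) 0) := by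
          rw [ofReal_eq_ofReal_max (-Real.log g.toReal), ENNReal.ofReal_mul ht,
            ENNReal.ofReal_toReal hg]
      _ ≤ ENNReal.ofReal 1 := ENNReal.ofReal_le_ofReal (real_neg_bound ht)
      _ = 1 := ENNReal.ofReal_one

/-! ### Measure-level lemmas -/

lemma measurable_logInt (p q : Measure α) :
    Measurable (fun a => ENNReal.ofReal (Real.log ((p.rnDeriv q a).toReal))) :=
  ENNReal.measurable_ofReal.comp
    (Real.measurable_log.comp (Measure.measurable_rnDeriv p q).ennreal_toReal)

lemma measurable_negLogInt (p q : Measure α) :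
    Measurable (fun a => ENNReal.ofReal (-Real.log ((p.rnDeriv q a).toReal))) :=
  ENNReal.measurable_ofReal.comp
    ((Real.measurable_log.comp (Measure.measurable_rnDeriv p q).ennreal_toReal).neg)

lemma lintegral_density {p q : Measure α} [p.HaveLebesgueDecomposition q] (h : p ≪ q)
    {g : α → ℝ≥0∞} (hg : Measurable g) :
    ∫⁻ a, g a ∂p = ∫⁻ a, p.rnDeriv q a * g a ∂q := by
  nth_rewrite 1 [← Measure.withDensity_rnDeriv_eq p q h]
  rw [lintegral_withDensity_eq_lintegral_mul _ (Measure.measurable_rnDeriv p q) hg]; rfl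

/-- The negative part is bounded by `q univ`. -/
lemma nInt_le_measure_univ (p q : Measure α) [IsFiniteMeasure p] [IsFiniteMeasure q]
    (h : p ≪ q) : nInt p q ≤ q Set.univ := by
  have hf : Measurable (p.rnDeriv q) := Measure.measurable_rnDeriv p q
  rw [nInt, lintegral_density h (measurable_negLogInt p q)]
  calc ∫⁻ a, p.rnDeriv q a * ENNReal.ofReal (-Real.log ((p.rnDeriv q a).toReal)) ∂q
      ≤ ∫⁻ _, 1 ∂q := lintegral_mono fun a => ennreal_neg_bound _
    _ = q Set.univ := by simp

lemma nInt_ne_top (p q : Measure α) [IsFiniteMeasure p] [IsFiniteMeasure q]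
    (h : p ≪ q) : nInt p q ≠ ⊤ :=
  fun ht => (measure_lt_top q Set.univ).ne (top_le_iff.mp (ht ▸ nInt_le_measure_univ p q h))

/-- Jensen: `nInt ≤ pInt` for probability measures. -/
lemma nInt_le_pInt (p q : Measure α) [IsProbabilityMeasure p] [IsProbabilityMeasure q]
    (h : p ≪ q) : nInt p q ≤ pInt p q := by
  have hf : Measurable (p.rnDeriv q) := Measure.measurable_rnDeriv p q
  have h1 : nInt p q + 1 ≤ pInt p q + 1 := by
    have hint : ∫⁻ a, p.rnDeriv q a ∂q = 1 := by
      rw [Measure.lintegral_rnDeriv h]; simp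
    have hn : nInt p q = ∫⁻ a, p.rnDeriv q a *
        ENNReal.ofReal (-Real.log ((p.rnDeriv q a).toReal)) ∂q := by
      rw [nInt, lintegral_density h (measurable_negLogInt p q)]
    have hp : pInt p q = ∫⁻ a, p.rnDeriv q a *
        ENNReal.ofReal (Real.log ((p.rnDeriv q a).toReal)) ∂q := by
      rw [pInt, lintegral_density h (measurable_logInt p q)]
    have hone : (1:ℝ≥0∞) = ∫⁻ _, (1:ℝ≥0∞) ∂q := by simp
    rw [hn, hp]
    nth_rewrite 1 [← hint]
    nth_rewrite 1 [hone]
    rw [← lintegral_add_right _ hf, ← lintegral_add_right _ measurable_const]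
    refine lintegral_mono_ae ?_
    filter_upwards [Measure.rnDeriv_ne_top p q] with a ha
    exact ennreal_key ha
  exact (ENNReal.add_le_add_iff_right ENNReal.one_ne_top).mp h1

lemma relEntropy_add_nInt (p q : Measure α) [IsProbabilityMeasure p] [IsProbabilityMeasure q]
    (h : p ≪ q) : relEntropy p q + nInt p q = pInt p q := by
  rw [relEntropy_eq_of_ac h]; exact tsub_add_cancel_of_le (nInt_le_pInt p q h)

/-- zero relative entropy forces equality. -/
lemma eq_of_relEntropy_eq_zero (p q : Measure α) [IsProbabilityMeasure p]
    [IsProbabilityMeasure q] (h : p ≪ q) (h0 : relEntropy p q = 0) : p = q := by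
  have hf : Measurable (p.rnDeriv q) := Measure.measurable_rnDeriv p q
  have hPN : pInt p q = nInt p q := by
    have := relEntropy_add_nInt p q h
    rw [h0, zero_add] at this; exact this.symm
  have hNfin : nInt p q ≠ ⊤ := by
    refine fun ht => ?_
    have := nInt_le_measure_univ p q h
    rw [ht, top_le_iff] at this
    simp at this
  -- u a ≤ v a pointwise a.e.; equal integrals; conclude u = v a.e.
  set u : α → ℝ≥0∞ := fun a => p.rnDeriv q a *
    ENNReal.ofReal (-Real.log ((p.rnDeriv q a).toReal)) + p.rnDeriv q a with hu
  set v : α → ℝ≥0∞ := fun a => p.rnDeriv q a *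
    ENNReal.ofReal (Real.log ((p.rnDeriv q a).toReal)) + 1 with hv
  have hmu : Measurable u := (hf.mul (measurable_negLogInt p q)).add hf
  have hmv : Measurable v := (hf.mul (measurable_logInt p q)).add measurable_const
  have hint : ∫⁻ a, p.rnDeriv q a ∂q = 1 := by rw [Measure.lintegral_rnDeriv h]; simp
  have hn : nInt p q = ∫⁻ a, p.rnDeriv q a *
      ENNReal.ofReal (-Real.log ((p.rnDeriv q a).toReal)) ∂q := by
    rw [nInt, lintegral_density h (measurable_negLogInt p q)]
  have hp : pInt p q = ∫⁻ a, p.rnDeriv q a *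
      ENNReal.ofReal (Real.log ((p.rnDeriv q a).toReal)) ∂q := by
    rw [pInt, lintegral_density h (measurable_logInt p q)]
  have hIu : ∫⁻ a, u a ∂q = nInt p q + 1 := by
    rw [hu]
    rw [lintegral_add_right _ hf, ← hn, hint]
  have hIv : ∫⁻ a, v a ∂q = pInt p q + 1 := by
    rw [hv]
    rw [lintegral_add_right _ measurable_const, ← hp, lintegral_one]
    simp
  have huv : ∀ᵐ a ∂q, u a ≤ v a := by
    filter_upwards [Measure.rnDeriv_ne_top p q] with a ha using ennreal_key ha
  have hIeq : ∫⁻ a, u a ∂q = ∫⁻ a, v a ∂q := by rw [hIu, hIv, hPN]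
  have hIfin : ∫⁻ a, u a ∂q ≠ ⊤ := by
    rw [hIu]; exact ENNReal.add_ne_top.mpr ⟨hNfin, ENNReal.one_ne_top⟩
  have hsub : ∫⁻ a, v a - u a ∂q = 0 := by
    rw [lintegral_sub hmu hIfin huv, hIeq, tsub_self]
  have hae : ∀ᵐ a ∂q, v a - u a = 0 := (lintegral_eq_zero_iff (hmv.sub hmu)).mp hsub
  have hone : ∀ᵐ a ∂q, p.rnDeriv q a = 1 := by
    filter_upwards [hae, huv, Measure.rnDeriv_ne_top p q] with a h1 h2 h3
    have : u a = v a := le_antisymm h2 (tsub_eq_zero_iff_le.mp h1)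
    exact ennreal_key_eq h3 this
  calc p = q.withDensity (p.rnDeriv q) := (Measure.withDensity_rnDeriv_eq p q h).symm
    _ = q.withDensity 1 := withDensity_congr_ae hone
    _ = q := by simp

/-! ### The chain rule identity (positive/negative parts, no subtraction) -/

lemma ofReal_tri (x y : ℝ) :
    ENNReal.ofReal (x + y) + ENNReal.ofReal (-x) + ENNReal.ofReal (-y)
      = ENNReal.ofReal (-(x + y)) + ENNReal.ofReal x + ENNReal.ofReal y := by
  rw [ofReal_eq_ofReal_max (x+y), ofReal_eq_ofReal_max (-x), ofReal_eq_ofReal_max (-y),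
    ofReal_eq_ofReal_max (-(x+y)), ofReal_eq_ofReal_max x, ofReal_eq_ofReal_max y,
    ← ENNReal.ofReal_add (le_max_right _ _) (le_max_right _ _),
    ← ENNReal.ofReal_add (by positivity) (le_max_right _ _),
    ← ENNReal.ofReal_add (le_max_right _ _) (le_max_right _ _),
    ← ENNReal.ofReal_add (by positivity) (le_max_right _ _)]
  congr 1
  rcases le_total x 0 with hx | hx <;> rcases le_total y 0 with hy | hy <;>
    rcases le_total (x+y) 0 with hxy | hxy <;>
    simp only [max_def] <;> split_ifs <;> linarith

/-- Chain-rule identity: for `p ≪ q ≪ r`,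
`pInt p r + nInt p q + Nc = nInt p r + pInt p q + Pc` where `Pc, Nc` are the positive and
negative parts of `∫ log (dq/dr) dp`. -/
lemma chain_identity (p q r : Measure α) [IsFiniteMeasure p] [IsFiniteMeasure q]
    [IsFiniteMeasure r] (hpq : p ≪ q) (hqr : q ≪ r) :
    pInt p r + nInt p q + (∫⁻ a, ENNReal.ofReal (-Real.log ((q.rnDeriv r a).toReal)) ∂p)
      = nInt p r + pInt p q
        + (∫⁻ a, ENNReal.ofReal (Real.log ((q.rnDeriv r a).toReal)) ∂p) := by
  have hpr : p ≪ r := hpq.trans hqr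
  set u : α → ℝ := fun a => Real.log ((p.rnDeriv q a).toReal) with hu
  set v : α → ℝ := fun a => Real.log ((q.rnDeriv r a).toReal) with hv
  set w : α → ℝ := fun a => Real.log ((p.rnDeriv r a).toReal) with hw
  have hwuv : ∀ᵐ a ∂p, w a = u a + v a := by
    filter_upwards [hpr.ae_le (Measure.rnDeriv_mul_rnDeriv hpq),
      Measure.rnDeriv_pos hpq, hpq.ae_le (Measure.rnDeriv_pos hqr),
      hpq.ae_le (Measure.rnDeriv_ne_top p q), hpr.ae_le (Measure.rnDeriv_ne_top q r)]
      with a hmul hupos hvpos hufin hvfin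
    have h1 : (p.rnDeriv r a).toReal
        = (p.rnDeriv q a).toReal * (q.rnDeriv r a).toReal := by
      rw [← hmul]; simp [ENNReal.toReal_mul]
    show Real.log ((p.rnDeriv r a).toReal)
        = Real.log ((p.rnDeriv q a).toReal) + Real.log ((q.rnDeriv r a).toReal)
    rw [h1]
    exact Real.log_mul (ENNReal.toReal_pos hupos.ne' hufin).ne'
      (ENNReal.toReal_pos hvpos.ne' hvfin).ne'
  have hmu : Measurable u := Real.measurable_log.comp (Measure.measurable_rnDeriv p q).ennreal_toReal
  have hmv : Measurable v := Real.measurable_log.comp (Measure.measurable_rnDeriv q r).ennreal_toReal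
  have hmw : Measurable w := Real.measurable_log.comp (Measure.measurable_rnDeriv p r).ennreal_toReal
  have key : ∫⁻ a, ENNReal.ofReal (w a) + ENNReal.ofReal (-u a) + ENNReal.ofReal (-v a) ∂p
      = ∫⁻ a, ENNReal.ofReal (-w a) + ENNReal.ofReal (u a) + ENNReal.ofReal (v a) ∂p := by
    refine lintegral_congr_ae ?_
    filter_upwards [hwuv] with a ha
    rw [ha]; exact ofReal_tri (u a) (v a)
  have e1 : ∫⁻ a, ENNReal.ofReal (w a) + ENNReal.ofReal (-u a) + ENNReal.ofReal (-v a) ∂p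
      = pInt p r + nInt p q + ∫⁻ a, ENNReal.ofReal (-v a) ∂p := by
    rw [lintegral_add_right _ (show Measurable fun a => ENNReal.ofReal (-v a) from hmv.neg.ennreal_ofReal),
      lintegral_add_right _ (show Measurable fun a => ENNReal.ofReal (-u a) from hmu.neg.ennreal_ofReal)]
    rfl
  have e2 : ∫⁻ a, ENNReal.ofReal (-w a) + ENNReal.ofReal (u a) + ENNReal.ofReal (v a) ∂p
      = nInt p r + pInt p q + ∫⁻ a, ENNReal.ofReal (v a) ∂p := by
    rw [lintegral_add_right _ hmv.ennreal_ofReal, lintegral_add_right _ hmu.ennreal_ofReal]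
    rfl
  rw [← e1, ← e2]; exact key

/-! ### ENNReal arithmetic helpers -/

lemma ennreal_arith3 {P1 N1 P2 N2 P3 N3 : ℝ≥0∞}
    (h : P1 + N2 + N3 = N1 + P2 + P3)
    (h1 : N1 ≤ P1) (h2 : N2 ≤ P2) (h3 : N3 ≤ P3)
    (f1 : N1 ≠ ⊤) (f2 : N2 ≠ ⊤) (f3 : N3 ≠ ⊤) :
    P1 - N1 = (P2 - N2) + (P3 - N3) := by
  have key : (N1 + N2 + N3) + (P1 - N1)
      = (N1 + N2 + N3) + ((P2 - N2) + (P3 - N3)) := by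
    calc (N1 + N2 + N3) + (P1 - N1) = ((P1 - N1) + N1) + N2 + N3 := by ring
      _ = P1 + N2 + N3 := by rw [tsub_add_cancel_of_le h1]
      _ = N1 + P2 + P3 := h
      _ = N1 + ((P2 - N2) + N2) + ((P3 - N3) + N3) := by
          rw [tsub_add_cancel_of_le h2, tsub_add_cancel_of_le h3]
      _ = (N1 + N2 + N3) + ((P2 - N2) + (P3 - N3)) := by ring
  exact (ENNReal.add_right_inj (by
    exact ENNReal.add_ne_top.mpr ⟨ENNReal.add_ne_top.mpr ⟨f1, f2⟩, f3⟩)).mp key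

lemma ennreal_arith5 {P1 N1 P2 N2 P3 N3 P4 N4 P5 N5 : ℝ≥0∞}
    (h : P1 + P2 + N3 + N4 + 2 * N5 = N1 + N2 + P3 + P4 + 2 * P5)
    (h1 : N1 ≤ P1) (h2 : N2 ≤ P2) (h3 : N3 ≤ P3) (h4 : N4 ≤ P4) (h5 : N5 ≤ P5)
    (f1 : N1 ≠ ⊤) (f2 : N2 ≠ ⊤) (f3 : N3 ≠ ⊤) (f4 : N4 ≠ ⊤) (f5 : N5 ≠ ⊤) :
    (P1 - N1) + (P2 - N2) = (P3 - N3) + (P4 - N4) + 2 * (P5 - N5) := by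
  have key : (N1 + N2 + N3 + N4 + 2 * N5) + ((P1 - N1) + (P2 - N2))
      = (N1 + N2 + N3 + N4 + 2 * N5)
          + ((P3 - N3) + (P4 - N4) + 2 * (P5 - N5)) := by
    calc (N1 + N2 + N3 + N4 + 2 * N5) + ((P1 - N1) + (P2 - N2))
        = ((P1 - N1) + N1) + ((P2 - N2) + N2) + N3 + N4 + 2 * N5 := by ring
      _ = P1 + P2 + N3 + N4 + 2 * N5 := by
          rw [tsub_add_cancel_of_le h1, tsub_add_cancel_of_le h2]
      _ = N1 + N2 + P3 + P4 + 2 * P5 := h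
      _ = N1 + N2 + ((P3 - N3) + N3) + ((P4 - N4) + N4) + 2 * ((P5 - N5) + N5) := by
          rw [tsub_add_cancel_of_le h3, tsub_add_cancel_of_le h4, tsub_add_cancel_of_le h5]
      _ = (N1 + N2 + N3 + N4 + 2 * N5)
          + ((P3 - N3) + (P4 - N4) + 2 * (P5 - N5)) := by ring
  refine (ENNReal.add_right_inj ?_).mp key
  refine ENNReal.add_ne_top.mpr ⟨ENNReal.add_ne_top.mpr ⟨ENNReal.add_ne_top.mpr
    ⟨ENNReal.add_ne_top.mpr ⟨f1, f2⟩, f3⟩, f4⟩, ?_⟩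
  exact ENNReal.mul_ne_top (by simp) f5

/-- Strict convexity: two minimizers whose mixture is no better must coincide. -/
lemma strict_convexity_unique {γ : Type*} [MeasurableSpace γ] (q m mh : Measure γ)
    [IsProbabilityMeasure q] [IsProbabilityMeasure m] [IsProbabilityMeasure mh]
    (hmq : m ≪ q) (hmhq : mh ≪ q)
    (heq : relEntropy m q = relEntropy mh q) (hfin : relEntropy mh q ≠ ⊤)
    (hmix : relEntropy mh q ≤ relEntropy ((2⁻¹:ℝ≥0∞) • m + (2⁻¹:ℝ≥0∞) • mh) q) :
    m = mh := by
  set w : Measure γ := (2⁻¹:ℝ≥0∞) • m + (2⁻¹:ℝ≥0∞) • mh with hw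
  haveI : IsProbabilityMeasure w := by
    constructor
    simp only [hw, Measure.add_apply, Measure.smul_apply, smul_eq_mul, measure_univ, mul_one]
    exact ENNReal.inv_two_add_inv_two
  have hmw : m ≪ w := by
    refine Measure.AbsolutelyContinuous.mk fun s hs h0 => ?_
    simp only [hw, Measure.add_apply, Measure.smul_apply, smul_eq_mul] at h0
    rcases add_eq_zero.mp h0 with ⟨h1, _⟩
    rcases mul_eq_zero.mp h1 with h | h
    · exact absurd h (by simp)
    · exact h
  have hmhw : mh ≪ w := by
    refine Measure.AbsolutelyContinuous.mk fun s hs h0 => ?_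
    simp only [hw, Measure.add_apply, Measure.smul_apply, smul_eq_mul] at h0
    rcases add_eq_zero.mp h0 with ⟨_, h1⟩
    rcases mul_eq_zero.mp h1 with h | h
    · exact absurd h (by simp)
    · exact h
  have hwq : w ≪ q := by
    refine Measure.AbsolutelyContinuous.mk fun s hs h0 => ?_
    simp only [hw, Measure.add_apply, Measure.smul_apply, smul_eq_mul, hmq h0, hmhq h0,
      mul_zero, add_zero]
  -- chain identities
  have hc1 := chain_identity m w q hmw hwq
  have hc2 := chain_identity mh w q hmhw hwq
  -- cross-term sums
  set u : γ → ℝ≥0∞ := fun a => ENNReal.ofReal (Real.log ((w.rnDeriv q a).toReal)) with hu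
  set v : γ → ℝ≥0∞ := fun a => ENNReal.ofReal (-Real.log ((w.rnDeriv q a).toReal)) with hv
  have hmix2 : ∀ g : γ → ℝ≥0∞, ∫⁻ a, g a ∂m + ∫⁻ a, g a ∂mh = 2 * ∫⁻ a, g a ∂w := by
    intro g
    simp only [hw, lintegral_add_measure, lintegral_smul_measure, smul_eq_mul]
    rw [mul_add, ← mul_assoc, ← mul_assoc,
      ENNReal.mul_inv_cancel two_ne_zero ENNReal.ofNat_ne_top, one_mul, one_mul]
  have hPc : (∫⁻ a, u a ∂m) + (∫⁻ a, u a ∂mh) = 2 * pInt w q := hmix2 u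
  have hNc : (∫⁻ a, v a ∂m) + (∫⁻ a, v a ∂mh) = 2 * nInt w q := hmix2 v
  -- combine
  have hsum : pInt m q + pInt mh q + nInt m w + nInt mh w + 2 * nInt w q
      = nInt m q + nInt mh q + pInt m w + pInt mh w + 2 * pInt w q := by
    calc pInt m q + pInt mh q + nInt m w + nInt mh w + 2 * nInt w q
        = (pInt m q + nInt m w + ∫⁻ a, v a ∂m) + (pInt mh q + nInt mh w + ∫⁻ a, v a ∂mh) := by
          rw [← hNc]; ring
      _ = (nInt m q + pInt m w + ∫⁻ a, u a ∂m) + (nInt mh q + pInt mh w + ∫⁻ a, u a ∂mh) := by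
          rw [hc1, hc2]
      _ = nInt m q + nInt mh q + pInt m w + pInt mh w + 2 * pInt w q := by
          rw [← hPc]; ring
  have harith := ennreal_arith5 hsum (nInt_le_pInt m q hmq) (nInt_le_pInt mh q hmhq)
    (nInt_le_pInt m w hmw) (nInt_le_pInt mh w hmhw) (nInt_le_pInt w q hwq)
    (nInt_ne_top m q hmq) (nInt_ne_top mh q hmhq) (nInt_ne_top m w hmw)
    (nInt_ne_top mh w hmhw) (nInt_ne_top w q hwq)
  rw [← relEntropy_eq_of_ac hmq, ← relEntropy_eq_of_ac hmhq, ← relEntropy_eq_of_ac hmw,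
    ← relEntropy_eq_of_ac hmhw, ← relEntropy_eq_of_ac hwq] at harith
  -- now: relE m q + relE mh q = relE m w + relE mh w + 2 * relE w q
  set c := relEntropy mh q with hc
  set s := relEntropy m w + relEntropy mh w with hs
  have hcc : c + c = s + 2 * relEntropy w q := by rw [← heq] at harith ⊢; rw [harith, hs]
  have h2r : 2 * c ≤ 2 * relEntropy w q := mul_le_mul_right hmix 2
  have hccfin : c + c ≠ ⊤ := ENNReal.add_ne_top.mpr ⟨hfin, hfin⟩
  have hs0 : s = 0 := by
    have h1 : s + (c + c) ≤ c + c := by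
      calc s + (c + c) = s + 2 * c := by rw [two_mul]
        _ ≤ s + 2 * relEntropy w q := add_le_add_right h2r s
        _ = c + c := hcc.symm
    have h2 : s + (c + c) ≤ 0 + (c + c) := by rwa [zero_add]
    exact le_antisymm (ENNReal.add_le_add_iff_right hccfin |>.mp h2) zero_le
  rcases add_eq_zero.mp hs0 with ⟨h1, h2⟩
  rw [eq_of_relEntropy_eq_zero m w hmw h1, eq_of_relEntropy_eq_zero mh w hmhw h2]


end SchroAux

namespace SchroAux

lemma measurable_ev0 {d : ℕ} : Measurable (ev0 (d := d)) :=
  (ContinuousEvalConst.continuous_eval_const _).measurable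

lemma measurable_ev1 {d : ℕ} : Measurable (ev1 (d := d)) :=
  (ContinuousEvalConst.continuous_eval_const _).measurable

lemma measurable_ep {d : ℕ} : Measurable (ep (d := d)) :=
  measurable_ev0.prodMk measurable_ev1

section Glue

variable {d : ℕ} (R : Measure (PathSp d)) [IsProbabilityMeasure R]
  (κ : Kernel (Euc d × Euc d) (PathSp d)) [IsMarkovKernel κ]

lemma isProb_map_ep (π : Measure (PathSp d)) [IsProbabilityMeasure π] :
    IsProbabilityMeasure (π.map ep) :=
  Measure.isProbabilityMeasure_map measurable_ep.aemeasurable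

lemma isProb_bind (m : Measure (Euc d × Euc d)) [IsProbabilityMeasure m] :
    IsProbabilityMeasure (m.bind (fun z => κ z)) := by
  constructor
  rw [Measure.bind_apply MeasurableSet.univ κ.measurable.aemeasurable]
  simp

/-- a.e. `z`, `κ z (ep ⁻¹' A)` is the indicator of `A`. -/
lemma kernel_preimage_ae
    (hfib : ∀ᵐ z ∂(R.map ep), (κ z) {φ : PathSp d | ep φ = z} = 1)
    {A : Set (Euc d × Euc d)} (hA : MeasurableSet A) :
    ∀ᵐ z ∂(R.map ep), (κ z) (ep ⁻¹' A) = A.indicator (fun _ => (1:ℝ≥0∞)) z := by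
  filter_upwards [hfib] with z hz
  by_cases hzA : z ∈ A
  · have hsub : {φ : PathSp d | ep φ = z} ⊆ ep ⁻¹' A := fun φ hφ => by
      simp only [Set.mem_setOf_eq] at hφ
      simp [Set.mem_preimage, hφ, hzA]
    have h1 : (1:ℝ≥0∞) ≤ κ z (ep ⁻¹' A) := hz ▸ measure_mono hsub
    rw [Set.indicator_of_mem hzA]
    exact le_antisymm prob_le_one h1
  · have hsub : ep ⁻¹' A ⊆ {φ : PathSp d | ep φ = z}ᶜ := fun φ hφ hc => by
      simp only [Set.mem_setOf_eq] at hc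
      exact hzA (hc ▸ hφ)
    have hc : κ z {φ : PathSp d | ep φ = z}ᶜ = 0 := by
      have hms : MeasurableSet {φ : PathSp d | ep φ = z} :=
        measurable_ep (measurableSet_singleton z)
      rw [measure_compl hms (measure_ne_top _ _), hz, measure_univ, tsub_self]
    rw [Set.indicator_of_notMem hzA]
    exact le_antisymm (hc ▸ measure_mono hsub) zero_le

/-- The glued measure has `ep`-marginal `m`. -/
lemma bind_map_ep
    (hfib : ∀ᵐ z ∂(R.map ep), (κ z) {φ : PathSp d | ep φ = z} = 1)
    (m : Measure (Euc d × Euc d)) [IsFiniteMeasure m] (hm : m ≪ R.map ep) :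
    (m.bind (fun z => κ z)).map ep = m := by
  ext A hA
  rw [Measure.map_apply measurable_ep hA,
    Measure.bind_apply (measurable_ep hA) κ.measurable.aemeasurable]
  rw [lintegral_congr_ae (hm.ae_le (kernel_preimage_ae R κ hfib hA))]
  exact lintegral_indicator_one hA

/-- The glued measure is `R.withDensity (f ∘ ep)` where `f = dm/dR₀₁`. -/
lemma bind_eq_withDensity
    (hfib : ∀ᵐ z ∂(R.map ep), (κ z) {φ : PathSp d | ep φ = z} = 1)
    (hdis : R = (R.map ep).bind (fun z => κ z))
    (m : Measure (Euc d × Euc d)) [IsFiniteMeasure m] (hm : m ≪ R.map ep) :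
    m.bind (fun z => κ z)
      = R.withDensity (fun φ => m.rnDeriv (R.map ep) (ep φ)) := by
  haveI : IsProbabilityMeasure (R.map ep) := isProb_map_ep R
  haveI : m.HaveLebesgueDecomposition (R.map ep) :=
    Measure.haveLebesgueDecomposition_of_finiteMeasure
  set f := m.rnDeriv (R.map ep) with hfdef
  have hf : Measurable f := Measure.measurable_rnDeriv _ _
  ext A hA
  rw [Measure.bind_apply hA κ.measurable.aemeasurable, withDensity_apply _ hA]
  have hstep1 : ∫⁻ z, κ z A ∂m = ∫⁻ z, f z * κ z A ∂(R.map ep) := by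
    exact lintegral_density hm (κ.measurable_coe hA)
  rw [hstep1]
  have hind : ∫⁻ φ in A, f (ep φ) ∂(R) = ∫⁻ φ, f (ep φ) * A.indicator (fun _ => 1) φ ∂(R) := by
    rw [← lintegral_indicator hA (fun φ => f (ep φ))]
    refine lintegral_congr fun φ => ?_
    by_cases hφ : φ ∈ A <;> simp [hφ]
  rw [hind]
  conv_rhs => rw [hdis]
  have hg : Measurable (fun φ : PathSp d => f (ep φ) * A.indicator (fun _ => (1:ℝ≥0∞)) φ) :=
    (hf.comp measurable_ep).mul (measurable_const.indicator hA)
  rw [Measure.lintegral_bind κ.measurable.aemeasurable hg.aemeasurable]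
  refine (lintegral_congr_ae ?_).symm
  filter_upwards [hfib] with z hz
  have hae : ∀ᵐ φ ∂(κ z), ep φ = z := by
    rw [ae_iff]
    have hms : MeasurableSet {φ : PathSp d | ep φ = z} :=
      measurable_ep (measurableSet_singleton z)
    have : {φ : PathSp d | ¬ ep φ = z} = {φ : PathSp d | ep φ = z}ᶜ := rfl
    rw [this, measure_compl hms (measure_ne_top _ _), hz, measure_univ, tsub_self]
  calc ∫⁻ φ, f (ep φ) * A.indicator (fun _ => 1) φ ∂(κ z)
      = ∫⁻ φ, f z * A.indicator (fun _ => 1) φ ∂(κ z) := by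
        refine lintegral_congr_ae ?_
        filter_upwards [hae] with φ hφ
        rw [hφ]
    _ = f z * ∫⁻ φ, A.indicator (fun _ => (1:ℝ≥0∞)) φ ∂(κ z) := lintegral_const_mul _
        (measurable_const.indicator hA)
    _ = f z * κ z A := by
        rw [show (fun _ : PathSp d => (1:ℝ≥0∞)) = 1 from rfl, lintegral_indicator_one hA]

/-- The glued measure is absolutely continuous w.r.t. `R`. -/
lemma bind_ac
    (hfib : ∀ᵐ z ∂(R.map ep), (κ z) {φ : PathSp d | ep φ = z} = 1)
    (hdis : R = (R.map ep).bind (fun z => κ z))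
    (m : Measure (Euc d × Euc d)) [IsFiniteMeasure m] (hm : m ≪ R.map ep) :
    m.bind (fun z => κ z) ≪ R := by
  rw [bind_eq_withDensity R κ hfib hdis m hm]
  exact withDensity_absolutelyContinuous _ _

/-- Entropy is preserved by gluing: `H(m ⊗ R^·‖R) = H(m‖R₀₁)`. -/
lemma relEntropy_bind
    (hfib : ∀ᵐ z ∂(R.map ep), (κ z) {φ : PathSp d | ep φ = z} = 1)
    (hdis : R = (R.map ep).bind (fun z => κ z))
    (m : Measure (Euc d × Euc d)) [IsFiniteMeasure m] (hm : m ≪ R.map ep) :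
    pInt (m.bind (fun z => κ z)) R = pInt m (R.map ep)
      ∧ nInt (m.bind (fun z => κ z)) R = nInt m (R.map ep)
      ∧ relEntropy (m.bind (fun z => κ z)) R = relEntropy m (R.map ep) := by
  set f := m.rnDeriv (R.map ep) with hfdef
  have hf : Measurable f := Measure.measurable_rnDeriv _ _
  set pb := m.bind (fun z => κ z) with hpb
  have hwd : pb = R.withDensity (fun φ => f (ep φ)) := bind_eq_withDensity R κ hfib hdis m hm
  have hac : pb ≪ R := bind_ac R κ hfib hdis m hm
  have hrn : (fun φ => pb.rnDeriv R φ) =ᵐ[R] fun φ => f (ep φ) := by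
    rw [hwd]
    exact Measure.rnDeriv_withDensity R (hf.comp measurable_ep)
  have hrnp : (fun φ => pb.rnDeriv R φ) =ᵐ[pb] fun φ => f (ep φ) := hac.ae_le hrn
  have hmapped : pb.map ep = m := bind_map_ep R κ hfib m hm
  have hP : pInt pb R = pInt m (R.map ep) := by
    have h1 : pInt pb R = ∫⁻ φ, ENNReal.ofReal (Real.log ((f (ep φ)).toReal)) ∂pb := by
      refine lintegral_congr_ae ?_
      filter_upwards [hrnp] with a ha
      have ha' : pb.rnDeriv R a = f (ep a) := ha
      rw [ha']
    have h2 : ∫⁻ φ, ENNReal.ofReal (Real.log ((f (ep φ)).toReal)) ∂pb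
        = ∫⁻ z, ENNReal.ofReal (Real.log ((f z).toReal)) ∂(pb.map ep) :=
      (lintegral_map (measurable_logInt m (R.map ep)) measurable_ep).symm
    rw [h1, h2, hmapped]; rfl
  have hN : nInt pb R = nInt m (R.map ep) := by
    have h1 : nInt pb R = ∫⁻ φ, ENNReal.ofReal (-Real.log ((f (ep φ)).toReal)) ∂pb := by
      refine lintegral_congr_ae ?_
      filter_upwards [hrnp] with a ha
      have ha' : pb.rnDeriv R a = f (ep a) := ha
      rw [ha']
    have h2 : ∫⁻ φ, ENNReal.ofReal (-Real.log ((f (ep φ)).toReal)) ∂pb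
        = ∫⁻ z, ENNReal.ofReal (-Real.log ((f z).toReal)) ∂(pb.map ep) :=
      (lintegral_map (measurable_negLogInt m (R.map ep)) measurable_ep).symm
    rw [h1, h2, hmapped]; rfl
  exact ⟨hP, hN, by rw [relEntropy_eq_of_ac hac, relEntropy_eq_of_ac hm, hP, hN]⟩

/-- `π ≪ (π.map ep) ⊗ R^·` whenever `π ≪ R`. -/
lemma ac_bind
    (hfib : ∀ᵐ z ∂(R.map ep), (κ z) {φ : PathSp d | ep φ = z} = 1)
    (hdis : R = (R.map ep).bind (fun z => κ z))
    (π : Measure (PathSp d)) [IsProbabilityMeasure π] (hπR : π ≪ R) :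
    π ≪ (π.map ep).bind (fun z => κ z) := by
  haveI : IsProbabilityMeasure (π.map ep) := isProb_map_ep π
  have hm : π.map ep ≪ R.map ep := hπR.map measurable_ep
  set f := (π.map ep).rnDeriv (R.map ep) with hfdef
  have hf : Measurable f := Measure.measurable_rnDeriv _ _
  have hwd : (π.map ep).bind (fun z => κ z) = R.withDensity (fun φ => f (ep φ)) :=
    bind_eq_withDensity R κ hfib hdis (π.map ep) hm
  haveI : (π.map ep).HaveLebesgueDecomposition (R.map ep) :=
    Measure.haveLebesgueDecomposition_of_finiteMeasure
  have hfe : Measurable (fun φ : PathSp d => f (ep φ)) := hf.comp measurable_ep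
  refine Measure.AbsolutelyContinuous.mk fun A hA h0 => ?_
  rw [hwd, withDensity_apply_eq_zero hfe] at h0
  have h1 : π ({φ : PathSp d | f (ep φ) ≠ 0} ∩ A) = 0 := hπR h0
  have hz : π {φ : PathSp d | f (ep φ) = 0} = 0 := by
    have hms : MeasurableSet {z : Euc d × Euc d | f z = 0} := hf (measurableSet_singleton 0)
    have he : π {φ : PathSp d | f (ep φ) = 0} = (π.map ep) {z | f z = 0} := by
      rw [Measure.map_apply measurable_ep hms]; rfl
    rw [he]
    have hpos : ∀ᵐ z ∂(π.map ep), 0 < f z := Measure.rnDeriv_pos hm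
    refine measure_mono_null (fun z hz0 => ?_) (ae_iff.mp hpos)
    simp only [Set.mem_setOf_eq] at hz0 ⊢
    rw [hz0]; simp
  refine le_antisymm ?_ zero_le
  calc π A ≤ π (({φ : PathSp d | f (ep φ) ≠ 0} ∩ A) ∪ {φ : PathSp d | f (ep φ) = 0}) := by
        refine measure_mono fun φ hφ => ?_
        by_cases h : f (ep φ) = 0
        · exact Or.inr h
        · exact Or.inl ⟨h, hφ⟩
    _ ≤ π ({φ : PathSp d | f (ep φ) ≠ 0} ∩ A) + π {φ : PathSp d | f (ep φ) = 0} :=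
        measure_union_le _ _
    _ = 0 := by rw [h1, hz, add_zero]

/-- Key decomposition: `H(π‖R) = H(π‖π₀₁⊗R^·) + H(π₀₁‖R₀₁)`. -/
lemma main_identity
    (hfib : ∀ᵐ z ∂(R.map ep), (κ z) {φ : PathSp d | ep φ = z} = 1)
    (hdis : R = (R.map ep).bind (fun z => κ z))
    (π : Measure (PathSp d)) [IsProbabilityMeasure π] (hπR : π ≪ R) :
    relEntropy π R
      = relEntropy π ((π.map ep).bind (fun z => κ z))
        + relEntropy (π.map ep) (R.map ep) := by
  haveI : IsProbabilityMeasure (π.map ep) := isProb_map_ep π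
  haveI : IsProbabilityMeasure (R.map ep) := isProb_map_ep R
  set m := π.map ep with hmdef
  haveI : IsProbabilityMeasure (m.bind (fun z => κ z)) := isProb_bind κ m
  have hm : m ≪ R.map ep := hπR.map measurable_ep
  set pb := m.bind (fun z => κ z) with hpbdef
  have hππ' : π ≪ pb := ac_bind R κ hfib hdis π hπR
  have hpbR : pb ≪ R := bind_ac R κ hfib hdis m hm
  have hchain := chain_identity π pb R hππ' hpbR
  -- identify the cross terms with `pInt m R₀₁` and `nInt m R₀₁`
  set f := m.rnDeriv (R.map ep) with hfdef
  have hf : Measurable f := Measure.measurable_rnDeriv _ _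
  have hwd : pb = R.withDensity (fun φ => f (ep φ)) := bind_eq_withDensity R κ hfib hdis m hm
  have hrn : (fun φ => pb.rnDeriv R φ) =ᵐ[R] fun φ => f (ep φ) := by
    rw [hwd]
    exact Measure.rnDeriv_withDensity R (hf.comp measurable_ep)
  have hrnπ : (fun φ => pb.rnDeriv R φ) =ᵐ[π] fun φ => f (ep φ) := hπR.ae_le hrn
  have hcrossP : (∫⁻ a, ENNReal.ofReal (Real.log ((pb.rnDeriv R a).toReal)) ∂π)
      = pInt m (R.map ep) := by
    have h1 : (∫⁻ a, ENNReal.ofReal (Real.log ((pb.rnDeriv R a).toReal)) ∂π)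
        = ∫⁻ φ, ENNReal.ofReal (Real.log ((f (ep φ)).toReal)) ∂π := by
      refine lintegral_congr_ae ?_
      filter_upwards [hrnπ] with a ha
      have ha' : pb.rnDeriv R a = f (ep a) := ha
      rw [ha']
    have h2 : ∫⁻ φ, ENNReal.ofReal (Real.log ((f (ep φ)).toReal)) ∂π
        = ∫⁻ z, ENNReal.ofReal (Real.log ((f z).toReal)) ∂(π.map ep) :=
      (lintegral_map (measurable_logInt m (R.map ep)) measurable_ep).symm
    rw [h1, h2]; rfl
  have hcrossN : (∫⁻ a, ENNReal.ofReal (-Real.log ((pb.rnDeriv R a).toReal)) ∂π)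
      = nInt m (R.map ep) := by
    have h1 : (∫⁻ a, ENNReal.ofReal (-Real.log ((pb.rnDeriv R a).toReal)) ∂π)
        = ∫⁻ φ, ENNReal.ofReal (-Real.log ((f (ep φ)).toReal)) ∂π := by
      refine lintegral_congr_ae ?_
      filter_upwards [hrnπ] with a ha
      have ha' : pb.rnDeriv R a = f (ep a) := ha
      rw [ha']
    have h2 : ∫⁻ φ, ENNReal.ofReal (-Real.log ((f (ep φ)).toReal)) ∂π
        = ∫⁻ z, ENNReal.ofReal (-Real.log ((f z).toReal)) ∂(π.map ep) :=
      (lintegral_map (measurable_negLogInt m (R.map ep)) measurable_ep).symm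
    rw [h1, h2]; rfl
  rw [hcrossP, hcrossN] at hchain
  have harith := ennreal_arith3 hchain (nInt_le_pInt π R hπR) (nInt_le_pInt π pb hππ')
    (nInt_le_pInt m (R.map ep) hm) (nInt_ne_top π R hπR) (nInt_ne_top π pb hππ')
    (nInt_ne_top m (R.map ep) hm)
  rw [← relEntropy_eq_of_ac hπR, ← relEntropy_eq_of_ac hππ',
    ← relEntropy_eq_of_ac hm] at harith
  exact harith


end Glue

end SchroAux

open SchroAux

/-- reduction of the dynamic Schrödinger problem to the static one: with
`(R^{xy}) = κ` the endpoint disintegration of `R`, if `π̂` is the (unique) minimizer of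
`H(·‖R)` over `Π^{C₁}(μ,ν)`, then (i) `π̂₀₁` is the unique minimizer of `H(·‖R₀₁)`
over `Π(μ,ν)`, (ii) `π̂ = π̂₀₁ ⊗ R^·`, and (iii) `H(π̂‖R) = H(π̂₀₁‖R₀₁)`. -/
theorem dynamic_to_static_schrodinger_reduction
    {d : ℕ} (hd : 1 ≤ d) (R : Measure (PathSp d)) [IsProbabilityMeasure R]
    (κ : Kernel (Euc d × Euc d) (PathSp d)) [IsMarkovKernel κ]
    (hfib : ∀ᵐ z ∂(R.map ep), (κ z) {φ : PathSp d | ep φ = z} = 1)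
    (hdis : R = (R.map ep).bind (fun z => κ z))
    (μ ν : Measure (Euc d)) [IsProbabilityMeasure μ] [IsProbabilityMeasure ν]
    (hex : ∃ π ∈ PathCouplings d μ ν, relEntropy π R ≠ ⊤)
    (πhat : Measure (PathSp d)) (hπ : πhat ∈ PathCouplings d μ ν)
    (hmin : ∀ π ∈ PathCouplings d μ ν, relEntropy πhat R ≤ relEntropy π R) :
    (πhat.map ep ∈ ProdCouplings d μ ν ∧
      (∀ m ∈ ProdCouplings d μ ν,
        relEntropy (πhat.map ep) (R.map ep) ≤ relEntropy m (R.map ep)) ∧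
      (∀ m ∈ ProdCouplings d μ ν,
        relEntropy m (R.map ep) = relEntropy (πhat.map ep) (R.map ep) →
          m = πhat.map ep)) ∧
    πhat = (πhat.map ep).bind (fun z => κ z) ∧
    relEntropy πhat R = relEntropy (πhat.map ep) (R.map ep) := by
  haveI : IsProbabilityMeasure πhat := hπ.1
  haveI : IsProbabilityMeasure (R.map ep) := isProb_map_ep R
  haveI : IsProbabilityMeasure (πhat.map ep) := isProb_map_ep πhat
  obtain ⟨π₀, hπ₀mem, hπ₀fin⟩ := hex
  have hfin : relEntropy πhat R ≠ ⊤ := ne_top_of_le_ne_top hπ₀fin (hmin π₀ hπ₀mem)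
  have hπR : πhat ≪ R := by
    by_contra h
    exact hfin (relEntropy_eq_top_of_not_ac h)
  have hmhat : πhat.map ep ≪ R.map ep := hπR.map measurable_ep
  -- membership of the endpoint marginal
  have hmemhat : πhat.map ep ∈ ProdCouplings d μ ν := by
    refine ⟨inferInstance, ?_, ?_⟩
    · rw [Measure.map_map measurable_fst measurable_ep]
      exact hπ.2.1
    · rw [Measure.map_map measurable_snd measurable_ep]
      exact hπ.2.2
  -- transfer of minimality to the static problem
  have hstatic_min : ∀ m ∈ ProdCouplings d μ ν,
      relEntropy πhat R ≤ relEntropy m (R.map ep) := by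
    intro m hmmem
    haveI : IsProbabilityMeasure m := hmmem.1
    by_cases hac : m ≪ R.map ep
    · have h5 := (relEntropy_bind R κ hfib hdis m hac).2.2
      have h6 : (m.bind (fun z => κ z)).map ep = m := bind_map_ep R κ hfib m hac
      have hmem : m.bind (fun z => κ z) ∈ PathCouplings d μ ν := by
        haveI := isProb_bind κ m
        refine ⟨inferInstance, ?_, ?_⟩
        · have h7 : (m.bind (fun z => κ z)).map ev0
              = ((m.bind (fun z => κ z)).map ep).map Prod.fst := by
            rw [Measure.map_map measurable_fst measurable_ep]; rfl
          rw [h7, h6]; exact hmmem.2.1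
        · have h7 : (m.bind (fun z => κ z)).map ev1
              = ((m.bind (fun z => κ z)).map ep).map Prod.snd := by
            rw [Measure.map_map measurable_snd measurable_ep]; rfl
          rw [h7, h6]; exact hmmem.2.2
      calc relEntropy πhat R ≤ relEntropy (m.bind (fun z => κ z)) R := hmin _ hmem
        _ = relEntropy m (R.map ep) := h5
    · rw [relEntropy_eq_top_of_not_ac hac]; exact le_top
  -- key decomposition
  have hkey : relEntropy πhat R
      = relEntropy πhat ((πhat.map ep).bind (fun z => κ z))
        + relEntropy (πhat.map ep) (R.map ep) :=
    main_identity R κ hfib hdis πhat hπR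
  -- (iii)
  have hIII : relEntropy πhat R = relEntropy (πhat.map ep) (R.map ep) := by
    refine le_antisymm (hstatic_min _ hmemhat) ?_
    rw [hkey]; exact le_add_self
  -- (ii)
  have hππ' : πhat ≪ (πhat.map ep).bind (fun z => κ z) := ac_bind R κ hfib hdis πhat hπR
  haveI : IsProbabilityMeasure ((πhat.map ep).bind (fun z => κ z)) :=
    isProb_bind κ (πhat.map ep)
  have hzero : relEntropy πhat ((πhat.map ep).bind (fun z => κ z)) = 0 := by
    have h8 : relEntropy (πhat.map ep) (R.map ep)
        + relEntropy πhat ((πhat.map ep).bind (fun z => κ z))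
        = relEntropy (πhat.map ep) (R.map ep) + 0 := by
      rw [add_zero, add_comm, ← hkey, hIII]
    exact (ENNReal.add_right_inj (hIII ▸ hfin)).mp h8
  have hII : πhat = (πhat.map ep).bind (fun z => κ z) :=
    eq_of_relEntropy_eq_zero _ _ hππ' hzero
  -- (i) second bullet
  have hIsnd : ∀ m ∈ ProdCouplings d μ ν,
      relEntropy (πhat.map ep) (R.map ep) ≤ relEntropy m (R.map ep) := by
    intro m hmm
    rw [← hIII]; exact hstatic_min m hmm
  -- (i) uniqueness
  refine ⟨⟨hmemhat, hIsnd, ?_⟩, hII, hIII⟩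
  intro m hmm hmeq
  haveI : IsProbabilityMeasure m := hmm.1
  have hmac : m ≪ R.map ep := by
    by_contra h
    rw [relEntropy_eq_top_of_not_ac h] at hmeq
    exact (hIII ▸ hfin) hmeq.symm
  -- mixture
  set w : Measure (Euc d × Euc d) := (2⁻¹:ℝ≥0∞) • m + (2⁻¹:ℝ≥0∞) • (πhat.map ep) with hwdef
  have hwmem : w ∈ ProdCouplings d μ ν := by
    constructor
    · constructor
      simp only [hwdef, Measure.add_apply, Measure.smul_apply, smul_eq_mul, measure_univ,
        mul_one]
      exact ENNReal.inv_two_add_inv_two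
    constructor
    · rw [hwdef, Measure.map_add _ _ measurable_fst, Measure.map_smul, Measure.map_smul,
        hmm.2.1, hmemhat.2.1, ← add_smul, ENNReal.inv_two_add_inv_two, one_smul]
    · rw [hwdef, Measure.map_add _ _ measurable_snd, Measure.map_smul, Measure.map_smul,
        hmm.2.2, hmemhat.2.2, ← add_smul, ENNReal.inv_two_add_inv_two, one_smul]
  have hwmin : relEntropy (πhat.map ep) (R.map ep) ≤ relEntropy w (R.map ep) :=
    hIsnd w hwmem
  exact strict_convexity_unique (R.map ep) m (πhat.map ep) hmac hmhat
    hmeq (hIII ▸ hfin) hwmin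

end
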